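/- Let S ⊆ ℝ², let K ≥ 1, and let c₁, …, c_K ∈ ℝ² be vectors such that there exists u ∈ ℝ² with ⟨u, c_k⟩ > 0 for all k. Then there exist indices k₁, k₂ ∈ {1, …, K} such that the efficient set of the K-objective family (c₁, …, c_K) over S equals the efficient set of the two-objective family (c_{k₁}, c_{k₂}) over S. -/
import Mathlib


open Matrix

/-- A point `x` is efficient (Pareto optimal) for the family of linear objectives
`y ↦ c k ⬝ᵥ y` over `S` if `x ∈ S` and no `y ∈ S` dominates it. -/
def Efficient {n K : ℕ} (S : Set (Fin n → ℝ)) (c : Fin K → (Fin n → ℝ))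
    (x : Fin n → ℝ) : Prop :=
  x ∈ S ∧ ¬ ∃ y ∈ S, (∀ k, c k ⬝ᵥ x ≤ c k ⬝ᵥ y) ∧ ∃ k₀, c k₀ ⬝ᵥ x < c k₀ ⬝ᵥ y

/-- Reconstruction of a vector in `ℝ²` from its inner products with `u` and the
rotated vector `![-u 1, u 0]`. -/
lemma reconstruct (u x : Fin 2 → ℝ) :
    (u ⬝ᵥ u) • x = (u ⬝ᵥ x) • u + (![-u 1, u 0] ⬝ᵥ x) • ![-u 1, u 0] := by
  funext i
  fin_cases i <;>
    simp [dotProduct, Fin.sum_univ_two, Pi.smul_apply, smul_eq_mul] <;> ring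

/-- Theorem 4.5, existential form: in ℝ², every MOLP whose gradients lie in a common
open half-plane is equivalent to a two-objective problem with the same efficient set. -/
theorem exists_two_objective_equivalent {K : ℕ} (hK : 1 ≤ K) (S : Set (Fin 2 → ℝ))
    (c : Fin K → (Fin 2 → ℝ)) (u : Fin 2 → ℝ) (hu : ∀ k, 0 < u ⬝ᵥ c k) :
    ∃ k₁ k₂ : Fin K,
      {x | Efficient S c x} = {x | Efficient S ![c k₁, c k₂] x} := by
  classical
  set v : Fin 2 → ℝ := ![-u 1, u 0] with hv
  set p : Fin K → ℝ := fun k => u ⬝ᵥ c k with hpdef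
  set q : Fin K → ℝ := fun k => v ⬝ᵥ c k with hqdef
  set t : Fin K → ℝ := fun k => q k / p k with htdef
  have hp0 : ∀ k, 0 < p k := hu
  have hqt : ∀ k, q k = p k * t k := by
    intro k
    show q k = p k * (q k / p k)
    rw [mul_comm, div_mul_cancel₀ _ (ne_of_gt (hp0 k))]
  -- u ≠ 0
  have huu : 0 < u ⬝ᵥ u := by
    have h0 := hu ⟨0, hK⟩
    by_contra h
    push_neg at h
    have heq : u ⬝ᵥ u = u 0 * u 0 + u 1 * u 1 := by
      simp [dotProduct, Fin.sum_univ_two]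
    have h00 : u 0 = 0 := by nlinarith [sq_nonneg (u 0), sq_nonneg (u 1)]
    have h11 : u 1 = 0 := by nlinarith [sq_nonneg (u 0), sq_nonneg (u 1)]
    simp [dotProduct, Fin.sum_univ_two, h00, h11] at h0
  have hne : (Finset.univ : Finset (Fin K)).Nonempty := ⟨⟨0, hK⟩, Finset.mem_univ _⟩
  obtain ⟨k₁, -, hk₁⟩ := Finset.exists_max_image Finset.univ t hne
  obtain ⟨k₂, -, hk₂⟩ := Finset.exists_min_image Finset.univ t hne
  have hk₁' : ∀ k, t k ≤ t k₁ := fun k => hk₁ k (Finset.mem_univ k)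
  have hk₂' : ∀ k, t k₂ ≤ t k := fun k => hk₂ k (Finset.mem_univ k)
  -- every c k is a nonnegative combination of c k₁ and c k₂
  have hcomb : ∀ k, ∃ a b : ℝ, 0 ≤ a ∧ 0 ≤ b ∧ c k = a • c k₁ + b • c k₂ := by
    intro k
    -- from scalar equations to vector equation
    have hvec : ∀ a b : ℝ, a * p k₁ + b * p k₂ = p k → a * q k₁ + b * q k₂ = q k →
        c k = a • c k₁ + b • c k₂ := by
      intro a b hA hB
      have h1 := reconstruct u (c k)
      have h2 := reconstruct u (c k₁)
      have h3 := reconstruct u (c k₂)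
      have key : (u ⬝ᵥ u) • c k = (u ⬝ᵥ u) • (a • c k₁ + b • c k₂) := by
        rw [h1]
        have : (u ⬝ᵥ u) • (a • c k₁ + b • c k₂)
            = a • ((u ⬝ᵥ u) • c k₁) + b • ((u ⬝ᵥ u) • c k₂) := by
          rw [smul_add, smul_comm (u ⬝ᵥ u) a, smul_comm (u ⬝ᵥ u) b]
        rw [this, h2, h3]
        have hpk : u ⬝ᵥ c k = p k := rfl
        have hqk : v ⬝ᵥ c k = q k := rfl
        have hpk1 : u ⬝ᵥ c k₁ = p k₁ := rfl
        have hqk1 : v ⬝ᵥ c k₁ = q k₁ := rfl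
        have hpk2 : u ⬝ᵥ c k₂ = p k₂ := rfl
        have hqk2 : v ⬝ᵥ c k₂ = q k₂ := rfl
        rw [← hv, hpk, hqk, hpk1, hqk1, hpk2, hqk2, ← hA, ← hB]
        funext i
        simp [Pi.smul_apply, smul_eq_mul, Pi.add_apply]
        ring
      have := smul_right_injective (Fin 2 → ℝ) (ne_of_gt huu) key
      exact this
    by_cases hEq : t k₁ = t k₂
    · -- all t's equal; c k is a positive multiple of c k₁
      have htk : t k = t k₁ := le_antisymm (hk₁' k) (hEq ▸ hk₂' k)
      refine ⟨p k / p k₁, 0, ?_, le_refl 0, ?_⟩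
      · exact le_of_lt (div_pos (hp0 k) (hp0 k₁))
      · apply hvec
        · rw [zero_mul, add_zero, div_mul_cancel₀ _ (ne_of_gt (hp0 k₁))]
        · rw [hqt k, hqt k₁, htk]
          have h1 := ne_of_gt (hp0 k₁)
          field_simp
          ring
    · have hlt : t k₂ < t k₁ := lt_of_le_of_ne (le_trans (hk₂' k) (hk₁' k)) (Ne.symm hEq)
      have hd : 0 < t k₁ - t k₂ := by linarith
      refine ⟨p k * (t k - t k₂) / (p k₁ * (t k₁ - t k₂)),
              p k * (t k₁ - t k) / (p k₂ * (t k₁ - t k₂)), ?_, ?_, ?_⟩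
      · have h1 : 0 ≤ t k - t k₂ := by linarith [hk₂' k]
        have h2 : 0 < p k₁ * (t k₁ - t k₂) := mul_pos (hp0 k₁) hd
        exact div_nonneg (mul_nonneg (le_of_lt (hp0 k)) h1) (le_of_lt h2)
      · have h1 : 0 ≤ t k₁ - t k := by linarith [hk₁' k]
        have h2 : 0 < p k₂ * (t k₁ - t k₂) := mul_pos (hp0 k₂) hd
        exact div_nonneg (mul_nonneg (le_of_lt (hp0 k)) h1) (le_of_lt h2)
      · apply hvec
        · have h1 := ne_of_gt (hp0 k₁)
          have h2 := ne_of_gt (hp0 k₂)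
          have h3 := ne_of_gt hd
          field_simp
          ring
        · rw [hqt k, hqt k₁, hqt k₂]
          have h1 := ne_of_gt (hp0 k₁)
          have h2 := ne_of_gt (hp0 k₂)
          have h3 := ne_of_gt hd
          field_simp
          ring
  -- now prove the sets coincide
  refine ⟨k₁, k₂, ?_⟩
  ext x
  simp only [Set.mem_setOf_eq, Efficient]
  constructor
  · rintro ⟨hxS, hndom⟩
    refine ⟨hxS, ?_⟩
    rintro ⟨y, hyS, hle, j₀, hlt⟩
    have hle1 : c k₁ ⬝ᵥ x ≤ c k₁ ⬝ᵥ y := by simpa using hle 0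
    have hle2 : c k₂ ⬝ᵥ x ≤ c k₂ ⬝ᵥ y := by simpa using hle 1
    apply hndom
    refine ⟨y, hyS, ?_, ?_⟩
    · intro k
      obtain ⟨a, b, ha, hb, hck⟩ := hcomb k
      rw [hck]
      simp only [add_dotProduct, smul_dotProduct, smul_eq_mul]
      nlinarith [mul_le_mul_of_nonneg_left hle1 ha, mul_le_mul_of_nonneg_left hle2 hb]
    · fin_cases j₀
      · exact ⟨k₁, by simpa using hlt⟩
      · exact ⟨k₂, by simpa using hlt⟩
  · rintro ⟨hxS, hndom⟩
    refine ⟨hxS, ?_⟩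
    rintro ⟨y, hyS, hle, k₀, hlt⟩
    have hle1 : c k₁ ⬝ᵥ x ≤ c k₁ ⬝ᵥ y := hle k₁
    have hle2 : c k₂ ⬝ᵥ x ≤ c k₂ ⬝ᵥ y := hle k₂
    apply hndom
    refine ⟨y, hyS, ?_, ?_⟩
    · intro j
      fin_cases j
      · simpa using hle1
      · simpa using hle2
    · obtain ⟨a, b, ha, hb, hck⟩ := hcomb k₀
      rw [hck] at hlt
      simp only [add_dotProduct, smul_dotProduct, smul_eq_mul] at hlt
      by_cases h1 : c k₁ ⬝ᵥ x < c k₁ ⬝ᵥ y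
      · exact ⟨0, by simpa using h1⟩
      · push_neg at h1
        have he1 : c k₁ ⬝ᵥ x = c k₁ ⬝ᵥ y := le_antisymm hle1 h1
        have h2 : c k₂ ⬝ᵥ x < c k₂ ⬝ᵥ y := by
          by_contra h2
          push_neg at h2
          have he2 : c k₂ ⬝ᵥ x = c k₂ ⬝ᵥ y := le_antisymm hle2 h2
          rw [he1, he2] at hlt
          exact lt_irrefl _ hlt
        exact ⟨1, by simpa using h2⟩
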